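/- arXiv:2404.03644 — 6 statements merged into one kernel-verified Lean document; each statement's English description precedes it below -/
import Mathlib

section
/- Let A be an M×N complex matrix and λ > 0. Then for every t ∈ ℝ and every ψ ∈ ℂ^N, the matrix exponential satisfies exp(−it·H_SGA²)·(ψ, 0) = (exp(−it·λA†A)·ψ, 0), where (ψ, 0) ∈ ℂ^{N+M} denotes ψ with M zero coordinates appended. -/
open Matrix NormedSpace

attribute [local instance] Matrix.linftyOpNormedAddCommGroup Matrix.linftyOpNormedRing
  Matrix.linftyOpNormedAlgebra

noncomputable def blockDiagAlgHom (N M : ℕ) :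
    (Matrix (Fin N) (Fin N) ℂ × Matrix (Fin M) (Fin M) ℂ) →ₐ[ℂ]
      Matrix (Fin N ⊕ Fin M) (Fin N ⊕ Fin M) ℂ where
  toFun p := fromBlocks p.1 0 0 p.2
  map_one' := by simp [Prod.fst_one, Prod.snd_one, fromBlocks_one]
  map_mul' p q := by
    simp [Prod.fst_mul, Prod.snd_mul, fromBlocks_multiply]
  map_zero' := by simp [Matrix.fromBlocks_zero]
  map_add' p q := by simp [Matrix.fromBlocks_add]
  commutes' r := by
    simp only [Algebra.algebraMap_eq_smul_one, Prod.smul_fst, Prod.smul_snd, Prod.fst_one,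
      Prod.snd_one]
    rw [← fromBlocks_one (l := Fin N) (m := Fin M) (α := ℂ), Matrix.fromBlocks_smul]
    simp

lemma exp_fromBlocks (N M : ℕ) (X : Matrix (Fin N) (Fin N) ℂ) (Y : Matrix (Fin M) (Fin M) ℂ) :
    exp (fromBlocks X 0 0 Y) = fromBlocks (exp X) 0 0 (exp Y) := by
  have hc : Continuous (blockDiagAlgHom N M) :=
    (blockDiagAlgHom N M).toLinearMap.continuous_of_finiteDimensional
  haveI : @CompleteSpace (Matrix (Fin N) (Fin N) ℂ × Matrix (Fin M) (Fin M) ℂ)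
      PseudoMetricSpace.toUniformSpace :=
    FiniteDimensional.complete ℂ _
  have h := map_exp (blockDiagAlgHom N M) hc (X, Y)
  have hxy : exp (X, Y) = (exp X, exp Y) := by
    ext1
    · exact Prod.fst_exp (X, Y)
    · exact Prod.snd_exp (X, Y)
  erw [hxy] at h
  exact h.symm

/-- For an `M × N` complex matrix `A` and `λ > 0`, for every `t ∈ ℝ` and
`ψ ∈ ℂ^N`, the matrix exponential satisfies
`exp(−it·H_SGA²)·(ψ, 0) = (exp(−it·λAᴴA)·ψ, 0)`, where `(ψ, 0) ∈ ℂ^{N+M}` denotes `ψ`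
with `M` zero coordinates appended. -/
theorem sga_sq_exp_action (M N : ℕ) (A : Matrix (Fin M) (Fin N) ℂ) (lam : ℝ)
    (hlam : 0 < lam) (t : ℝ) (ψ : Fin N → ℂ) :
    let HSGA : Matrix (Fin N ⊕ Fin M) (Fin N ⊕ Fin M) ℂ :=
      (Real.sqrt lam : ℂ) • Matrix.fromBlocks 0 Aᴴ A 0
    (NormedSpace.exp ((-(Complex.I) * (t : ℂ)) • (HSGA ^ 2))) *ᵥ Sum.elim ψ 0 =
      Sum.elim ((NormedSpace.exp ((-(Complex.I) * (t : ℂ)) • ((lam : ℂ) • (Aᴴ * A)))) *ᵥ ψ) 0 := by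
  intro HSGA
  set c : ℂ := -(Complex.I) * (t : ℂ)
  have hsq : ((Real.sqrt lam : ℂ))^2 = (lam : ℂ) := by
    rw [← Complex.ofReal_pow, Real.sq_sqrt hlam.le]
  have hH2 : c • (HSGA ^ 2) =
      fromBlocks (c • ((lam : ℂ) • (Aᴴ * A))) 0 0 (c • ((lam : ℂ) • (A * Aᴴ))) := by
    show c • (((Real.sqrt lam : ℂ) • Matrix.fromBlocks 0 Aᴴ A 0) ^ 2) = _
    rw [smul_pow, hsq, sq, Matrix.fromBlocks_multiply]
    simp [Matrix.fromBlocks_smul, smul_smul, mul_comm]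
  rw [hH2, exp_fromBlocks, Matrix.fromBlocks_mulVec]
  simp
end

section
/- There exists a universal constant C > 0 such that for every t ∈ ℝ and every ε ∈ (0, 2/e), there exist polynomials P_cos and P_sin with real coefficients of degree at most C·(|t| + log(1/ε)) satisfying sup_{x ∈ [−1,1]} |P_cos(x)| ≤ 1, sup_{x ∈ [−1,1]} |P_sin(x)| ≤ 1, sup_{x ∈ [−1,1]} |cos(tx) − P_cos(x)| ≤ ε, and sup_{x ∈ [−1,1]} |sin(tx) − P_sin(x)| ≤ ε. -/
open Polynomial Finset

/-- Term bound: for `2r ≤ n ≤ k`, `r^k/k! ≤ e^r (1/2)^(k-n)`. -/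
lemma term_bound (r : ℝ) (hr : 0 ≤ r) (n : ℕ) (hn : 2 * r ≤ n) :
    ∀ k, n ≤ k → r ^ k / k.factorial ≤ Real.exp r * (1 / 2) ^ (k - n) := by
  intro k hk
  induction k with
  | zero =>
    interval_cases n
    simpa using Real.one_le_exp hr
  | succ k ih =>
    rcases Nat.lt_or_ge n (k + 1) with h | h
    · have hk' : n ≤ k := Nat.lt_succ_iff.mp h
      have ihk := ih hk'
      have hhalf : r / (k + 1) ≤ 1 / 2 := by
        rw [div_le_div_iff₀ (by positivity) (by norm_num)]
        have : (n : ℝ) ≤ k + 1 := by exact_mod_cast Nat.le_succ_of_le hk'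
        linarith
      have hfk : ((k.factorial : ℝ)) ≠ 0 := by positivity
      have heq : r ^ (k + 1) / (k + 1).factorial
          = (r / (k + 1)) * (r ^ k / k.factorial) := by
        rw [Nat.factorial_succ]
        push_cast
        field_simp
        ring
      have hs : k + 1 - n = (k - n) + 1 := by omega
      rw [heq, hs, pow_succ]
      have h1 : (r / (k + 1)) * (r ^ k / k.factorial)
          ≤ (1 / 2) * (r ^ k / k.factorial) := by
        apply mul_le_mul_of_nonneg_right hhalf (by positivity)
      refine h1.trans ?_
      calc (1 / 2 : ℝ) * (r ^ k / k.factorial)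
          ≤ (1 / 2) * (Real.exp r * (1 / 2) ^ (k - n)) := by
            apply mul_le_mul_of_nonneg_left ihk (by norm_num)
        _ = Real.exp r * ((1 / 2) ^ (k - n) * (1 / 2)) := by ring
    · have : n = k + 1 := le_antisymm hk h
      subst this
      simp only [Nat.sub_self, pow_zero, mul_one]
      calc r ^ (k + 1) / (k + 1).factorial
          ≤ ∑ i ∈ range (k + 2), r ^ i / i.factorial :=
            Finset.single_le_sum (f := fun i => r ^ i / (i.factorial : ℝ))
              (fun i _ => by positivity)
              (show k + 1 ∈ range (k + 2) by simp)
        _ ≤ Real.exp r := Real.sum_le_exp_of_nonneg hr _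

/-- Tail bound for the cosine series. -/
lemma cos_tail (y r : ℝ) (hr : 0 ≤ r) (hy : |y| ≤ r) (m n : ℕ)
    (hn : 2 * r ≤ n) (h2m : n ≤ 2 * m) :
    |Real.cos y - ∑ k ∈ range m, (-1) ^ k * y ^ (2 * k) / (2 * k).factorial|
      ≤ (4 / 3) * Real.exp r * (1 / 2) ^ (2 * m - n) := by
  set f : ℕ → ℝ := fun k => (-1) ^ k * y ^ (2 * k) / (2 * k).factorial with hf
  have hs : HasSum f (Real.cos y) := Real.hasSum_cos y
  have hsum := hs.summable
  have key : Real.cos y - ∑ k ∈ range m, f k = ∑' i, f (i + m) := by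
    have := Summable.sum_add_tsum_nat_add m hsum
    rw [hs.tsum_eq] at this
    linarith
  rw [key]
  have hgeom : HasSum (fun i : ℕ => (Real.exp r * (1 / 2) ^ (2 * m - n)) * (1 / 4) ^ i)
      ((Real.exp r * (1 / 2) ^ (2 * m - n)) * (4 / 3)) := by
    have := hasSum_geometric_of_lt_one (r := (1/4 : ℝ)) (by norm_num) (by norm_num)
    have h43 : (1 - (1/4 : ℝ))⁻¹ = 4 / 3 := by norm_num
    rw [h43] at this
    exact this.mul_left _
  have hb : ∀ i : ℕ, ‖f (i + m)‖ ≤ (Real.exp r * (1 / 2) ^ (2 * m - n)) * (1 / 4) ^ i := by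
    intro i
    have h1 : ‖f (i + m)‖ = |y| ^ (2 * (i + m)) / (2 * (i + m)).factorial := by
      simp only [hf, Real.norm_eq_abs, abs_div, abs_mul, abs_pow, abs_neg, abs_one, one_pow,
        one_mul, Nat.abs_cast]
    have h2 : |y| ^ (2 * (i + m)) / ((2 * (i + m)).factorial : ℝ)
        ≤ r ^ (2 * (i + m)) / (2 * (i + m)).factorial := by
      apply div_le_div_of_nonneg_right _ _ |>.trans_eq rfl
      · exact pow_le_pow_left₀ (abs_nonneg _) hy _ |>.trans_eq rfl
      · positivity
    have h3 : r ^ (2 * (i + m)) / ((2 * (i + m)).factorial : ℝ)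
        ≤ Real.exp r * (1 / 2) ^ (2 * (i + m) - n) :=
      term_bound r hr n hn _ (by omega)
    have h4 : (1 / 2 : ℝ) ^ (2 * (i + m) - n)
        = (1 / 2) ^ (2 * m - n) * (1 / 4) ^ i := by
      have : 2 * (i + m) - n = (2 * m - n) + 2 * i := by omega
      rw [this, pow_add, pow_mul]
      norm_num
    rw [h1]
    calc |y| ^ (2 * (i + m)) / ((2 * (i + m)).factorial : ℝ)
        ≤ Real.exp r * (1 / 2) ^ (2 * (i + m) - n) := h2.trans h3
      _ = (Real.exp r * (1 / 2) ^ (2 * m - n)) * (1 / 4) ^ i := by rw [h4]; ring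
  have := tsum_of_norm_bounded hgeom hb
  calc |∑' i, f (i + m)| ≤ (Real.exp r * (1 / 2) ^ (2 * m - n)) * (4 / 3) := this
    _ = (4 / 3) * Real.exp r * (1 / 2) ^ (2 * m - n) := by ring

/-- Tail bound for the sine series. -/
lemma sin_tail (y r : ℝ) (hr : 0 ≤ r) (hy : |y| ≤ r) (m n : ℕ)
    (hn : 2 * r ≤ n) (h2m : n ≤ 2 * m) :
    |Real.sin y - ∑ k ∈ range m, (-1) ^ k * y ^ (2 * k + 1) / (2 * k + 1).factorial|
      ≤ (4 / 3) * Real.exp r * (1 / 2) ^ (2 * m - n) := by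
  set f : ℕ → ℝ := fun k => (-1) ^ k * y ^ (2 * k + 1) / (2 * k + 1).factorial with hf
  have hs : HasSum f (Real.sin y) := Real.hasSum_sin y
  have hsum := hs.summable
  have key : Real.sin y - ∑ k ∈ range m, f k = ∑' i, f (i + m) := by
    have := Summable.sum_add_tsum_nat_add m hsum
    rw [hs.tsum_eq] at this
    linarith
  rw [key]
  have hgeom : HasSum (fun i : ℕ => (Real.exp r * (1 / 2) ^ (2 * m - n)) * (1 / 4) ^ i)
      ((Real.exp r * (1 / 2) ^ (2 * m - n)) * (4 / 3)) := by
    have := hasSum_geometric_of_lt_one (r := (1/4 : ℝ)) (by norm_num) (by norm_num)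
    have h43 : (1 - (1/4 : ℝ))⁻¹ = 4 / 3 := by norm_num
    rw [h43] at this
    exact this.mul_left _
  have hb : ∀ i : ℕ, ‖f (i + m)‖ ≤ (Real.exp r * (1 / 2) ^ (2 * m - n)) * (1 / 4) ^ i := by
    intro i
    have h1 : ‖f (i + m)‖ = |y| ^ (2 * (i + m) + 1) / (2 * (i + m) + 1).factorial := by
      simp only [hf, Real.norm_eq_abs, abs_div, abs_mul, abs_pow, abs_neg, abs_one, one_pow,
        one_mul, Nat.abs_cast]
    have h2 : |y| ^ (2 * (i + m) + 1) / ((2 * (i + m) + 1).factorial : ℝ)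
        ≤ r ^ (2 * (i + m) + 1) / (2 * (i + m) + 1).factorial := by
      apply div_le_div_of_nonneg_right _ _ |>.trans_eq rfl
      · exact pow_le_pow_left₀ (abs_nonneg _) hy _ |>.trans_eq rfl
      · positivity
    have h3 : r ^ (2 * (i + m) + 1) / ((2 * (i + m) + 1).factorial : ℝ)
        ≤ Real.exp r * (1 / 2) ^ (2 * (i + m) + 1 - n) :=
      term_bound r hr n hn _ (by omega)
    have h4 : (1 / 2 : ℝ) ^ (2 * (i + m) + 1 - n)
        ≤ (1 / 2) ^ (2 * m - n) * (1 / 4) ^ i := by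
      have he : 2 * (i + m) + 1 - n = ((2 * m - n) + 2 * i) + 1 := by omega
      rw [he, pow_succ, pow_add, pow_mul]
      have : ((1:ℝ)/2)^2 = 1/4 := by norm_num
      rw [this]
      nlinarith [pow_nonneg (by norm_num : (0:ℝ) ≤ 1/2) (2*m-n),
        pow_nonneg (by norm_num : (0:ℝ) ≤ 1/4) i,
        mul_nonneg (pow_nonneg (by norm_num : (0:ℝ) ≤ 1/2) (2*m-n))
          (pow_nonneg (by norm_num : (0:ℝ) ≤ 1/4) i)]
    rw [h1]
    calc |y| ^ (2 * (i + m) + 1) / ((2 * (i + m) + 1).factorial : ℝ)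
        ≤ Real.exp r * (1 / 2) ^ (2 * (i + m) + 1 - n) := h2.trans h3
      _ ≤ (Real.exp r * (1 / 2) ^ (2 * m - n)) * (1 / 4) ^ i := by
          rw [mul_assoc]
          exact mul_le_mul_of_nonneg_left h4 (Real.exp_nonneg r)
  have := tsum_of_norm_bounded hgeom hb
  calc |∑' i, f (i + m)| ≤ (Real.exp r * (1 / 2) ^ (2 * m - n)) * (4 / 3) := this
    _ = (4 / 3) * Real.exp r * (1 / 2) ^ (2 * m - n) := by ring

set_option maxHeartbeats 2000000 in
/-- (Polynomial approximations of trigonometric functions.) There is a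
universal constant `C > 0` such that for every `t ∈ ℝ` and `ε ∈ (0, 2/e)` there are real
polynomials `P_cos`, `P_sin` of degree at most `C·(|t| + log(1/ε))`, bounded by 1 on
`[−1,1]`, and `ε`-approximating `cos(tx)` and `sin(tx)` respectively on `[−1,1]`. -/
theorem poly_approx_cos_sin :
    ∃ C : ℝ, 0 < C ∧
      ∀ (t ε : ℝ), 0 < ε → ε < 2 / Real.exp 1 →
        ∃ Pc Ps : Polynomial ℝ,
          (Pc.natDegree : ℝ) ≤ C * (|t| + Real.log (1 / ε)) ∧
          (Ps.natDegree : ℝ) ≤ C * (|t| + Real.log (1 / ε)) ∧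
          (∀ x ∈ Set.Icc (-1 : ℝ) 1, |Pc.eval x| ≤ 1) ∧
          (∀ x ∈ Set.Icc (-1 : ℝ) 1, |Ps.eval x| ≤ 1) ∧
          (∀ x ∈ Set.Icc (-1 : ℝ) 1, |Real.cos (t * x) - Pc.eval x| ≤ ε) ∧
          (∀ x ∈ Set.Icc (-1 : ℝ) 1, |Real.sin (t * x) - Ps.eval x| ≤ ε) := by
  refine ⟨60, by norm_num, fun t ε hε hε2 => ?_⟩
  set r := |t| with hr_def
  have hr : 0 ≤ r := abs_nonneg t
  set L := Real.log (1 / ε) with hL_def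
  have hlog2_lt : Real.log 2 < 0.6931471808 := Real.log_two_lt_d9
  have hlog2_gt : (0.6931471803 : ℝ) < Real.log 2 := Real.log_two_gt_d9
  have hL3 : (0.3 : ℝ) ≤ L := by
    have h1 : Real.exp 1 / 2 ≤ 1 / ε := by
      have h0 : ε * Real.exp 1 < 2 := (lt_div_iff₀ (Real.exp_pos 1)).mp hε2
      rw [div_le_div_iff₀ (by norm_num) hε]
      linarith [mul_comm ε (Real.exp 1)]
    have h2 : Real.log (Real.exp 1 / 2) ≤ L := by
      apply Real.log_le_log (by positivity) h1
    rw [Real.log_div (by positivity) (by norm_num), Real.log_exp] at h2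
    linarith
  have hε1 : ε < 1 := by
    have : (2 : ℝ) / Real.exp 1 < 1 := by
      rw [div_lt_one (Real.exp_pos 1)]
      have := Real.exp_one_gt_d9
      linarith
    linarith
  set n := ⌈2 * r⌉₊ with hn_def
  set m := ⌈4 * r + 2 * L⌉₊ + 6 with hm_def
  have hn1 : 2 * r ≤ (n : ℝ) := Nat.le_ceil _
  have hn2 : (n : ℝ) ≤ 2 * r + 1 := by
    have := Nat.ceil_lt_add_one (by positivity : (0:ℝ) ≤ 2 * r)
    linarith
  have hm1 : 4 * r + 2 * L ≤ (⌈4 * r + 2 * L⌉₊ : ℝ) := Nat.le_ceil _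
  have hm2 : (⌈4 * r + 2 * L⌉₊ : ℝ) ≤ 4 * r + 2 * L + 1 := by
    have := Nat.ceil_lt_add_one (by positivity : (0:ℝ) ≤ 4 * r + 2 * L)
    linarith
  have hmR1 : (m : ℝ) = (⌈4 * r + 2 * L⌉₊ : ℝ) + 6 := by push_cast [hm_def]; ring
  have hm_lb : 4 * r + 2 * L + 6 ≤ (m : ℝ) := by rw [hmR1]; linarith
  have hm_ub : (m : ℝ) ≤ 4 * r + 2 * L + 7 := by rw [hmR1]; linarith
  have h2m : n ≤ 2 * m := by
    have h2mR : (n : ℝ) ≤ 2 * (m : ℝ) := by linarith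
    exact_mod_cast h2mR
  have hjR : ((2 * m - n : ℕ) : ℝ) = 2 * (m : ℝ) - n := by
    rw [Nat.cast_sub h2m]; push_cast; ring
  have hjlb : 6 * r + 4 * L + 11 ≤ ((2 * m - n : ℕ) : ℝ) := by
    rw [hjR]; linarith
  -- the tail bound quantity
  have hδ : (4 / 3) * Real.exp r * (1 / 2) ^ (2 * m - n) ≤ ε / 8 := by
    set j := 2 * m - n with hj_def
    have hhalf : (1 / 2 : ℝ) = Real.exp (-Real.log 2) := by
      rw [Real.exp_neg, Real.exp_log (by norm_num : (0:ℝ) < 2)]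
      norm_num
    have hpow : (1 / 2 : ℝ) ^ j = Real.exp ((j : ℝ) * (-Real.log 2)) := by
      rw [hhalf, Real.exp_nat_mul]
    have hlogε : Real.log ε = -L := by
      rw [hL_def, one_div, Real.log_inv, neg_neg]
    have hkey : r + (j : ℝ) * (-Real.log 2) ≤ Real.log ε - 4 * Real.log 2 := by
      have hp : (6 * r + 4 * L + 11) * 0.6931471803 ≤ (j : ℝ) * Real.log 2 := by
        apply mul_le_mul hjlb (le_of_lt hlog2_gt) (by norm_num) (by positivity)
      rw [hlogε]
      nlinarith [hlog2_lt, hr, hL3]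
    have hexp : Real.exp (r + (j : ℝ) * (-Real.log 2))
        ≤ Real.exp (Real.log ε - 4 * Real.log 2) := Real.exp_le_exp.mpr hkey
    have he2 : Real.exp (Real.log ε - 4 * Real.log 2) = ε / 16 := by
      rw [Real.exp_sub, Real.exp_log hε]
      congr 1
      rw [show (4 : ℝ) * Real.log 2 = (4 : ℕ) * Real.log 2 by norm_num,
        Real.exp_nat_mul, Real.exp_log (by norm_num : (0:ℝ) < 2)]
      norm_num
    rw [he2] at hexp
    calc (4 / 3) * Real.exp r * (1 / 2) ^ j
        = (4 / 3) * Real.exp (r + (j : ℝ) * (-Real.log 2)) := by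
          rw [hpow, mul_assoc, ← Real.exp_add]
      _ ≤ (4 / 3) * (ε / 16) := by
          apply mul_le_mul_of_nonneg_left hexp (by norm_num)
      _ ≤ ε / 8 := by linarith
  -- the polynomials
  set Qc : Polynomial ℝ :=
    ∑ k ∈ range m, Polynomial.C ((-1) ^ k * t ^ (2 * k) / (2 * k).factorial)
      * Polynomial.X ^ (2 * k) with hQc_def
  set Qs : Polynomial ℝ :=
    ∑ k ∈ range m, Polynomial.C ((-1) ^ k * t ^ (2 * k + 1) / (2 * k + 1).factorial)
      * Polynomial.X ^ (2 * k + 1) with hQs_def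
  have hQc_eval : ∀ x : ℝ, Qc.eval x
      = ∑ k ∈ range m, (-1) ^ k * (t * x) ^ (2 * k) / (2 * k).factorial := by
    intro x
    rw [hQc_def, Polynomial.eval_finset_sum]
    refine Finset.sum_congr rfl fun k _ => ?_
    simp [mul_pow]
    ring
  have hQs_eval : ∀ x : ℝ, Qs.eval x
      = ∑ k ∈ range m, (-1) ^ k * (t * x) ^ (2 * k + 1) / (2 * k + 1).factorial := by
    intro x
    rw [hQs_def, Polynomial.eval_finset_sum]
    refine Finset.sum_congr rfl fun k _ => ?_
    simp [mul_pow]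
    ring
  have hQc_deg : Qc.natDegree ≤ 2 * m := by
    apply Polynomial.natDegree_sum_le_of_forall_le
    intro k hk
    have hk' : k < m := Finset.mem_range.mp hk
    exact (Polynomial.natDegree_C_mul_X_pow_le _ _).trans (by omega)
  have hQs_deg : Qs.natDegree ≤ 2 * m := by
    apply Polynomial.natDegree_sum_le_of_forall_le
    intro k hk
    have hk' : k < m := Finset.mem_range.mp hk
    exact (Polynomial.natDegree_C_mul_X_pow_le _ _).trans (by omega)
  clear hQc_def hQs_def hn_def hm_def hL_def hmR1 hm1 hm2 hn2 hjR hjlb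
  clear_value Qc Qs n m r L
  refine ⟨Polynomial.C (1 - ε / 2) * Qc, Polynomial.C (1 - ε / 2) * Qs, ?_, ?_, ?_, ?_, ?_, ?_⟩
  · calc ((Polynomial.C (1 - ε / 2) * Qc).natDegree : ℝ)
        ≤ (Qc.natDegree : ℝ) := by exact_mod_cast Polynomial.natDegree_C_mul_le _ _
      _ ≤ (2 * m : ℕ) := by exact_mod_cast hQc_deg
      _ ≤ 60 * (r + L) := by push_cast; linarith
  · calc ((Polynomial.C (1 - ε / 2) * Qs).natDegree : ℝ)
        ≤ (Qs.natDegree : ℝ) := by exact_mod_cast Polynomial.natDegree_C_mul_le _ _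
      _ ≤ (2 * m : ℕ) := by exact_mod_cast hQs_deg
      _ ≤ 60 * (r + L) := by push_cast; linarith
  · intro x hx
    have hx1 : |x| ≤ 1 := abs_le.mpr ⟨hx.1, hx.2⟩
    have hyr : |t * x| ≤ r := by
      rw [abs_mul]
      calc |t| * |x| ≤ |t| * 1 := mul_le_mul_of_nonneg_left hx1 (abs_nonneg t)
        _ = r := by rw [mul_one, hr_def]
    have hc := (cos_tail (t * x) r hr hyr m n hn1 h2m).trans hδ
    rw [← hQc_eval x] at hc
    have hcos := Real.abs_cos_le_one (t * x)
    have hQb : |Qc.eval x| ≤ 1 + ε / 8 := by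
      have := abs_sub_abs_le_abs_sub (Qc.eval x) (Real.cos (t * x))
      rw [abs_sub_comm] at this
      linarith
    rw [Polynomial.eval_mul, Polynomial.eval_C, abs_mul,
      abs_of_nonneg (by linarith : (0:ℝ) ≤ 1 - ε / 2)]
    nlinarith [abs_nonneg (Qc.eval x)]
  · intro x hx
    have hx1 : |x| ≤ 1 := abs_le.mpr ⟨hx.1, hx.2⟩
    have hyr : |t * x| ≤ r := by
      rw [abs_mul]
      calc |t| * |x| ≤ |t| * 1 := mul_le_mul_of_nonneg_left hx1 (abs_nonneg t)
        _ = r := by rw [mul_one, hr_def]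
    have hc := (sin_tail (t * x) r hr hyr m n hn1 h2m).trans hδ
    rw [← hQs_eval x] at hc
    have hsin := Real.abs_sin_le_one (t * x)
    have hQb : |Qs.eval x| ≤ 1 + ε / 8 := by
      have := abs_sub_abs_le_abs_sub (Qs.eval x) (Real.sin (t * x))
      rw [abs_sub_comm] at this
      linarith
    rw [Polynomial.eval_mul, Polynomial.eval_C, abs_mul,
      abs_of_nonneg (by linarith : (0:ℝ) ≤ 1 - ε / 2)]
    nlinarith [abs_nonneg (Qs.eval x)]
  · intro x hx
    have hx1 : |x| ≤ 1 := abs_le.mpr ⟨hx.1, hx.2⟩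
    have hyr : |t * x| ≤ r := by
      rw [abs_mul]
      calc |t| * |x| ≤ |t| * 1 := mul_le_mul_of_nonneg_left hx1 (abs_nonneg t)
        _ = r := by rw [mul_one, hr_def]
    have hc := (cos_tail (t * x) r hr hyr m n hn1 h2m).trans hδ
    rw [← hQc_eval x] at hc
    have hcos := Real.abs_cos_le_one (t * x)
    have hQb : |Qc.eval x| ≤ 1 + ε / 8 := by
      have := abs_sub_abs_le_abs_sub (Qc.eval x) (Real.cos (t * x))
      rw [abs_sub_comm] at this
      linarith
    rw [Polynomial.eval_mul, Polynomial.eval_C]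
    have hsplit : Real.cos (t * x) - (1 - ε / 2) * Qc.eval x
        = (Real.cos (t * x) - Qc.eval x) + (ε / 2) * Qc.eval x := by ring
    rw [hsplit]
    calc |(Real.cos (t * x) - Qc.eval x) + (ε / 2) * Qc.eval x|
        ≤ |Real.cos (t * x) - Qc.eval x| + |(ε / 2) * Qc.eval x| := abs_add_le _ _
      _ ≤ ε / 8 + (ε / 2) * (1 + ε / 8) := by
          rw [abs_mul, abs_of_nonneg (by linarith : (0:ℝ) ≤ ε / 2)]
          have := mul_le_mul_of_nonneg_left hQb (by linarith : (0:ℝ) ≤ ε / 2)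
          linarith
      _ ≤ ε := by nlinarith
  · intro x hx
    have hx1 : |x| ≤ 1 := abs_le.mpr ⟨hx.1, hx.2⟩
    have hyr : |t * x| ≤ r := by
      rw [abs_mul]
      calc |t| * |x| ≤ |t| * 1 := mul_le_mul_of_nonneg_left hx1 (abs_nonneg t)
        _ = r := by rw [mul_one, hr_def]
    have hc := (sin_tail (t * x) r hr hyr m n hn1 h2m).trans hδ
    rw [← hQs_eval x] at hc
    have hsin := Real.abs_sin_le_one (t * x)
    have hQb : |Qs.eval x| ≤ 1 + ε / 8 := by
      have := abs_sub_abs_le_abs_sub (Qs.eval x) (Real.sin (t * x))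
      rw [abs_sub_comm] at this
      linarith
    rw [Polynomial.eval_mul, Polynomial.eval_C]
    have hsplit : Real.sin (t * x) - (1 - ε / 2) * Qs.eval x
        = (Real.sin (t * x) - Qs.eval x) + (ε / 2) * Qs.eval x := by ring
    rw [hsplit]
    calc |(Real.sin (t * x) - Qs.eval x) + (ε / 2) * Qs.eval x|
        ≤ |Real.sin (t * x) - Qs.eval x| + |(ε / 2) * Qs.eval x| := abs_add_le _ _
      _ ≤ ε / 8 + (ε / 2) * (1 + ε / 8) := by
          rw [abs_mul, abs_of_nonneg (by linarith : (0:ℝ) ≤ ε / 2)]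
          have := mul_le_mul_of_nonneg_left hQb (by linarith : (0:ℝ) ≤ ε / 2)
          linarith
      _ ≤ ε := by nlinarith
end

section
/- Let T be an M×M unitary complex matrix and let Π be an M×M orthogonal projection (a Hermitian matrix with Π² = Π) such that H' := ΠTΠ is Hermitian. Define A := ((T† + I)/2)·Π. Then 2·A†A = Π + H', the operator norm of A is at most 1, and for every v ∈ ℂ^M with Πv = v and H'v = μv (μ ∈ ℝ), one has 2·A†A·v = (1 + μ)·v. -/
open Matrix
open scoped Matrix.Norms.L2Operator

/-- Let `T` be an `M×M` unitary and `Π` an orthogonal projection such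
that `H' = ΠTΠ` is Hermitian. With `A = ((Tᴴ + 1)/2)·Π`, one has `2AᴴA = Π + H'`, the
operator norm of `A` is at most 1, and every `v` with `Πv = v` and `H'v = μv` (`μ ∈ ℝ`)
satisfies `2AᴴA v = (1+μ)v`. -/
theorem block_encoding_gap_amplifiable (M : ℕ) (T P : Matrix (Fin M) (Fin M) ℂ)
    (hT1 : Tᴴ * T = 1) (hT2 : T * Tᴴ = 1)
    (hPherm : P.IsHermitian) (hPproj : P * P = P)
    (hH : (P * T * P).IsHermitian) :
    let A : Matrix (Fin M) (Fin M) ℂ := ((2 : ℂ)⁻¹ • (Tᴴ + 1)) * P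
    ((2 : ℂ) • (Aᴴ * A) = P + P * T * P) ∧
    ‖LinearMap.toContinuousLinearMap (Matrix.toEuclideanLin A)‖ ≤ 1 ∧
    (∀ (v : Fin M → ℂ) (μ : ℝ), P *ᵥ v = v → (P * T * P) *ᵥ v = (μ : ℂ) • v →
      (2 : ℂ) • ((Aᴴ * A) *ᵥ v) = ((1 + μ : ℝ) : ℂ) • v) := by
  intro A
  have hP : Pᴴ = P := hPherm
  have hH' : P * Tᴴ * P = P * T * P := by
    have := hH.eq
    rwa [conjTranspose_mul, conjTranspose_mul, hP, ← mul_assoc] at this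
  have main : (T + 1) * (Tᴴ + 1) = (2 : ℂ) • 1 + T + Tᴴ := by
    rw [mul_add, add_mul, add_mul, mul_one, one_mul, one_mul, hT2, two_smul]; abel
  have key : (2 : ℂ) • (Aᴴ * A) = P + P * T * P := by
    have hAH : Aᴴ = P * ((2 : ℂ)⁻¹ • (T + 1)) := by
      simp [A, conjTranspose_mul, conjTranspose_smul, hP, Complex.star_def, map_inv₀,
        Matrix.mul_smul, mul_add, smul_add]
    show (2 : ℂ) • (Aᴴ * (((2 : ℂ)⁻¹ • (Tᴴ + 1)) * P)) = _
    rw [hAH, Matrix.mul_smul, Matrix.smul_mul, Matrix.smul_mul, Matrix.mul_smul,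
      smul_smul, smul_smul]
    norm_num
    rw [mul_assoc P, ← mul_assoc (T + 1), main]
    simp only [mul_add, add_mul, Matrix.mul_smul, Matrix.smul_mul, mul_one, one_mul,
      hPproj, hH', ← mul_assoc]
    rw [smul_add, smul_add, smul_smul]
    norm_num
    rw [add_assoc, ← add_smul]
    norm_num
  refine ⟨key, ?_, ?_⟩
  · -- norm bound
    have hn1 : ‖(1 : Matrix (Fin M) (Fin M) ℂ)‖ ≤ 1 := by
      have h := Matrix.l2_opNorm_conjTranspose_mul_self (1 : Matrix (Fin M) (Fin M) ℂ)
      rw [conjTranspose_one, mul_one] at h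
      nlinarith [norm_nonneg (1 : Matrix (Fin M) (Fin M) ℂ)]
    have hnT : ‖T‖ ≤ 1 := by
      have h := Matrix.l2_opNorm_conjTranspose_mul_self T
      rw [hT1] at h
      nlinarith [norm_nonneg T]
    have hnP : ‖P‖ ≤ 1 := by
      have h := Matrix.l2_opNorm_conjTranspose_mul_self P
      rw [hP, hPproj] at h
      nlinarith [norm_nonneg P]
    have : ‖((2 : ℂ)⁻¹ • (Tᴴ + 1)) * P‖ ≤ 1 := by
      calc ‖((2 : ℂ)⁻¹ • (Tᴴ + 1)) * P‖ ≤ ‖(2 : ℂ)⁻¹ • (Tᴴ + 1)‖ * ‖P‖ := norm_mul_le _ _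
      _ ≤ (‖(2 : ℂ)⁻¹‖ * (‖Tᴴ‖ + ‖(1 : Matrix (Fin M) (Fin M) ℂ)‖)) * ‖P‖ := by
          refine mul_le_mul_of_nonneg_right ?_ (norm_nonneg _)
          exact (norm_smul _ _).le.trans
            (mul_le_mul_of_nonneg_left (norm_add_le _ _) (norm_nonneg _))
      _ ≤ 1 := by
          rw [Matrix.l2_opNorm_conjTranspose]
          have h2 : ‖(2 : ℂ)⁻¹‖ = 1/2 := by simp
          rw [h2]
          nlinarith [norm_nonneg P, norm_nonneg T,
            norm_nonneg (1 : Matrix (Fin M) (Fin M) ℂ)]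
    rwa [Matrix.l2_opNorm_def, LinearEquiv.trans_apply] at this
  · intro v μ hPv hHv
    have : ((2 : ℂ) • (Aᴴ * A)) *ᵥ v = (P + P * T * P) *ᵥ v := by rw [key]
    rw [Matrix.smul_mulVec, Matrix.add_mulVec, hPv, hHv] at this
    rw [this]
    push_cast
    rw [add_smul, one_smul]
end

section
/- Let N ≥ 2 be an integer and x a fixed basis index. Then for all t ∈ ℝ, ⟨x| exp(−it·H_x) |s⟩ = (1+1/√N)/2 − e^{−2it/√N}·(1−1/√N)/2. Consequently, |⟨x| exp(−it·H_x) |s⟩|² ≥ sin²(t/√N) for all 0 ≤ t ≤ (π/2)√N, and exp(−i·(π/2)√N·H_x)|s⟩ = |x⟩. -/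
open Matrix

private lemma exp_mulVec_eigen {n : Type*} [Fintype n] [DecidableEq n]
    (A : Matrix n n ℂ) (v : n → ℂ) (μ : ℂ) (h : A *ᵥ v = μ • v) :
    NormedSpace.exp A *ᵥ v = Complex.exp μ • v := by
  letI : SeminormedRing (Matrix n n ℂ) := Matrix.linftyOpSemiNormedRing
  letI : NormedRing (Matrix n n ℂ) := Matrix.linftyOpNormedRing
  letI : NormedAlgebra ℂ (Matrix n n ℂ) := Matrix.linftyOpNormedAlgebra
  have hpow : ∀ k : ℕ, A ^ k *ᵥ v = μ ^ k • v := by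
    intro k
    induction k with
    | zero => simp
    | succ k ih =>
      rw [pow_succ, ← Matrix.mulVec_mulVec, h, Matrix.mulVec_smul, ih, smul_smul, pow_succ]
      ring_nf
  have hsum : Summable fun k : ℕ => ((Nat.factorial k : ℂ))⁻¹ • A ^ k :=
    NormedSpace.expSeries_summable' A
  let L : Matrix n n ℂ →ₗ[ℂ] (n → ℂ) :=
    { toFun := fun M => M *ᵥ v
      map_add' := fun M M' => Matrix.add_mulVec M M' v
      map_smul' := fun c M => Matrix.smul_mulVec c M v }
  have hL : Continuous L := L.continuous_of_finiteDimensional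
  have : NormedSpace.exp A *ᵥ v = ∑' k : ℕ, ((Nat.factorial k : ℂ))⁻¹ • (A ^ k *ᵥ v) := by
    rw [NormedSpace.exp_eq_tsum ℂ]
    have := (⟨L, hL⟩ : Matrix n n ℂ →L[ℂ] (n → ℂ)).map_tsum hsum
    simpa [L] using this
  rw [this]
  have h2 : ∀ k : ℕ, ((Nat.factorial k : ℂ))⁻¹ • (A ^ k *ᵥ v) = (((Nat.factorial k : ℂ))⁻¹ * μ ^ k) • v := by
    intro k; rw [hpow k, smul_smul]
  simp_rw [h2]
  have hμ : Summable fun k : ℕ => ((Nat.factorial k : ℂ))⁻¹ * μ ^ k := by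
    simpa [smul_eq_mul] using NormedSpace.expSeries_summable' (𝕂 := ℂ) μ
  rw [hμ.tsum_smul_const, Complex.exp_eq_exp_ℂ, NormedSpace.exp_eq_tsum ℂ]
  · simp [smul_eq_mul]

private lemma vecMulVec_mulVec' {n : Type*} [Fintype n] (u w v : n → ℂ) :
    Matrix.vecMulVec u w *ᵥ v = (w ⬝ᵥ v) • u := by
  ext i
  simp only [Matrix.mulVec, Matrix.vecMulVec_apply, dotProduct, Pi.smul_apply,
    smul_eq_mul, Finset.sum_mul]
  exact Finset.sum_congr rfl fun j _ => by ring

/-- Time evolution under the Grover Hamiltonian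
`H_x = (1 + 1/√N)·I − |x⟩⟨x| − |s⟩⟨s|`:
`⟨x| exp(−it H_x) |s⟩ = (1+1/√N)/2 − e^{−2it/√N}(1−1/√N)/2`, hence
`|⟨x| exp(−it H_x) |s⟩|² ≥ sin²(t/√N)` for `0 ≤ t ≤ π/2·√N`, and
`exp(−i(π/2)√N·H_x)|s⟩ = |x⟩`. -/
theorem grover_time_evolution (N : ℕ) (hN : 2 ≤ N) (x : Fin N) :
    let ketx : Fin N → ℂ := fun i => if i = x then 1 else 0
    let kets : Fin N → ℂ := fun _ => ((Real.sqrt N : ℝ) : ℂ)⁻¹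
    let Hx : Matrix (Fin N) (Fin N) ℂ :=
      ((1 + (Real.sqrt N)⁻¹ : ℝ) : ℂ) • 1 -
        Matrix.vecMulVec ketx (star ketx) - Matrix.vecMulVec kets (star kets)
    (∀ t : ℝ,
      star ketx ⬝ᵥ ((NormedSpace.exp ((-Complex.I * (t : ℂ)) • Hx)) *ᵥ kets) =
        (((1 + (Real.sqrt N)⁻¹) / 2 : ℝ) : ℂ) -
          Complex.exp (-2 * Complex.I * (t : ℂ) / ((Real.sqrt N : ℝ) : ℂ)) *
            (((1 - (Real.sqrt N)⁻¹) / 2 : ℝ) : ℂ)) ∧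
    (∀ t : ℝ, 0 ≤ t → t ≤ Real.pi / 2 * Real.sqrt N →
      Real.sin (t / Real.sqrt N) ^ 2 ≤
        ‖star ketx ⬝ᵥ ((NormedSpace.exp ((-Complex.I * (t : ℂ)) • Hx)) *ᵥ kets)‖ ^ 2) ∧
    ((NormedSpace.exp
        ((-Complex.I * ((Real.pi / 2 * Real.sqrt N : ℝ) : ℂ)) • Hx)) *ᵥ kets = ketx) := by
  intro ketx kets Hx
  have hNpos : (0:ℝ) < N := by positivity
  have hrt : 0 < Real.sqrt N := Real.sqrt_pos.mpr hNpos
  have hrne : Real.sqrt N ≠ 0 := ne_of_gt hrt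
  have hcne : ((Real.sqrt N : ℝ) : ℂ) ≠ 0 := Complex.ofReal_ne_zero.mpr hrne
  set c : ℂ := ((Real.sqrt N : ℝ) : ℂ)⁻¹ with hc
  have hNne : (N : ℂ) ≠ 0 := by
    exact_mod_cast Nat.cast_ne_zero.mpr (by omega)
  -- dot products
  have hxx : star ketx ⬝ᵥ ketx = 1 := by
    simp [ketx, dotProduct, apply_ite (star : ℂ → ℂ), Finset.sum_ite_eq']
  have hxs : star ketx ⬝ᵥ kets = c := by
    simp [ketx, kets, dotProduct, apply_ite (star : ℂ → ℂ), Finset.sum_ite_eq']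
    exact hc.symm
  have hstarc : star c = c := by
    rw [hc, ← Complex.ofReal_inv]
    exact Complex.conj_ofReal _
  have hsx : star kets ⬝ᵥ ketx = c := by
    simp [ketx, kets, dotProduct, Finset.sum_ite_eq', ← Complex.ofReal_inv,
      Complex.conj_ofReal]
    rw [hc]; push_cast; ring
  have hcc : c * c = (N : ℂ)⁻¹ := by
    rw [hc, ← mul_inv]
    congr 1
    rw [← Complex.ofReal_mul, Real.mul_self_sqrt hNpos.le, Complex.ofReal_natCast]
  have hss : star kets ⬝ᵥ kets = 1 := by
    simp only [kets, dotProduct, Pi.star_apply, Finset.sum_const, Finset.card_univ,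
      Fintype.card_fin, nsmul_eq_mul]
    rw [← hc, hstarc, hcc]
    field_simp
  have hone : ((1 + (Real.sqrt N)⁻¹ : ℝ) : ℂ) = 1 + c := by
    rw [hc]; push_cast; ring
  -- action of Hx
  have hHx : Hx *ᵥ ketx = c • ketx - c • kets := by
    simp only [Hx, Matrix.sub_mulVec, Matrix.smul_mulVec, Matrix.one_mulVec,
      vecMulVec_mulVec', hxx, hsx, hone]
    module
  have hHs : Hx *ᵥ kets = c • kets - c • ketx := by
    simp only [Hx, Matrix.sub_mulVec, Matrix.smul_mulVec, Matrix.one_mulVec,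
      vecMulVec_mulVec', hxs, hss, hone]
    module
  have hplus : ∀ t : ℝ, ((-Complex.I * (t:ℂ)) • Hx) *ᵥ (ketx + kets) = (0:ℂ) • (ketx + kets) := by
    intro t
    rw [Matrix.smul_mulVec, Matrix.mulVec_add, hHx, hHs]
    module
  have hminus : ∀ t : ℝ, ((-Complex.I * (t:ℂ)) • Hx) *ᵥ (ketx - kets) =
      (-2 * Complex.I * (t:ℂ) * c) • (ketx - kets) := by
    intro t
    rw [Matrix.smul_mulVec, Matrix.mulVec_sub, hHx, hHs]
    module
  have hk : kets = (2⁻¹:ℂ) • ((ketx + kets) - (ketx - kets)) := by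
    ext i; simp [ketx, kets]; ring
  have hkey : ∀ t : ℝ, (NormedSpace.exp ((-Complex.I * (t:ℂ)) • Hx)) *ᵥ kets =
      (2⁻¹:ℂ) • ((ketx + kets) - Complex.exp (-2 * Complex.I * (t:ℂ) * c) • (ketx - kets)) := by
    intro t
    conv_lhs => rw [hk]
    rw [Matrix.mulVec_smul, Matrix.mulVec_sub,
      exp_mulVec_eigen _ _ _ (hplus t), exp_mulVec_eigen _ _ _ (hminus t),
      Complex.exp_zero, one_smul]
  -- Part 1
  have part1 : ∀ t : ℝ,
      star ketx ⬝ᵥ ((NormedSpace.exp ((-Complex.I * (t : ℂ)) • Hx)) *ᵥ kets) =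
        (((1 + (Real.sqrt N)⁻¹) / 2 : ℝ) : ℂ) -
          Complex.exp (-2 * Complex.I * (t : ℂ) / ((Real.sqrt N : ℝ) : ℂ)) *
            (((1 - (Real.sqrt N)⁻¹) / 2 : ℝ) : ℂ) := by
    intro t
    rw [hkey t]
    have hexp : (-2 * Complex.I * (t:ℂ) * c) =
        -2 * Complex.I * (t:ℂ) / ((Real.sqrt N : ℝ) : ℂ) := by
      rw [hc, div_eq_mul_inv]
    rw [hexp]
    simp only [dotProduct_smul, dotProduct_add, dotProduct_sub, hxx, hxs,
      smul_eq_mul]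
    rw [hc]
    push_cast
    ring
  refine ⟨part1, ?_, ?_⟩
  · -- Part 2
    intro t _ht0 _ht1
    rw [part1 t]
    set u : ℝ := t / Real.sqrt N with hu
    have harg : -2 * Complex.I * (t:ℂ) / ((Real.sqrt N : ℝ) : ℂ) =
        ((-(2*u) : ℝ) : ℂ) * Complex.I := by
      rw [hu]; push_cast; ring
    rw [harg]
    set z : ℂ := (((1 + (Real.sqrt N)⁻¹) / 2 : ℝ) : ℂ) -
        Complex.exp (((-(2*u) : ℝ) : ℂ) * Complex.I) * (((1 - (Real.sqrt N)⁻¹) / 2 : ℝ) : ℂ)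
      with hz
    have hre : z.re = (1 + (Real.sqrt N)⁻¹) / 2 - Real.cos (-(2*u)) * ((1 - (Real.sqrt N)⁻¹) / 2) := by
      rw [hz]
      simp only [Complex.sub_re, Complex.mul_re, Complex.ofReal_re, Complex.ofReal_im,
        Complex.exp_ofReal_mul_I_re, Complex.exp_ofReal_mul_I_im]
      ring
    have him : z.im = -(Real.sin (-(2*u)) * ((1 - (Real.sqrt N)⁻¹) / 2)) := by
      rw [hz]
      simp only [Complex.sub_im, Complex.mul_im, Complex.ofReal_re, Complex.ofReal_im,
        Complex.exp_ofReal_mul_I_re, Complex.exp_ofReal_mul_I_im]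
      ring
    have hnorm : ‖z‖ ^ 2 = z.re ^ 2 + z.im ^ 2 := by
      rw [Complex.sq_norm, Complex.normSq_apply]; ring
    rw [hnorm, hre, him, Real.cos_neg, Real.sin_neg]
    have hpy : Real.sin (2*u) ^ 2 + Real.cos (2*u) ^ 2 = 1 := Real.sin_sq_add_cos_sq _
    have hhalf : Real.sin u ^ 2 = 1/2 - Real.cos (2*u)/2 := by
      have h1 := Real.cos_sq u
      have h2 := Real.sin_sq u
      linarith
    have hcos : -1 ≤ Real.cos (2*u) := Real.neg_one_le_cos _
    have hcr : 0 ≤ (Real.sqrt N)⁻¹ := by positivity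
    nlinarith [mul_nonneg (sq_nonneg ((Real.sqrt N)⁻¹)) (by linarith : (0:ℝ) ≤ 1 + Real.cos (2*u)),
      sq_nonneg (Real.sin (2*u) * ((1 - (Real.sqrt N)⁻¹) / 2))]
  · -- Part 3
    rw [hkey (Real.pi / 2 * Real.sqrt N)]
    have harg : (-2 * Complex.I * ((Real.pi / 2 * Real.sqrt N : ℝ) : ℂ) * c) =
        -((Real.pi : ℂ) * Complex.I) := by
      rw [hc]
      have h5 : ((Real.pi / 2 * Real.sqrt N : ℝ) : ℂ) * (((Real.sqrt N : ℝ)) : ℂ)⁻¹ =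
          ((Real.pi / 2 : ℝ) : ℂ) := by
        rw [← Complex.ofReal_inv, ← Complex.ofReal_mul]
        congr 1
        field_simp
      calc -2 * Complex.I * ((Real.pi / 2 * Real.sqrt N : ℝ) : ℂ) * (((Real.sqrt N : ℝ)) : ℂ)⁻¹
          = -2 * Complex.I * (((Real.pi / 2 * Real.sqrt N : ℝ) : ℂ) * (((Real.sqrt N : ℝ)) : ℂ)⁻¹) := by ring
        _ = -2 * Complex.I * ((Real.pi / 2 : ℝ) : ℂ) := by rw [h5]
        _ = -((Real.pi : ℂ) * Complex.I) := by push_cast; ring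
    rw [harg, Complex.exp_neg, Complex.exp_pi_mul_I]
    ext i
    simp [ketx, kets]
    ring
end

section
/- Let G' ≥ 1 and let V_1, …, V_{G'} be N×N unitary complex matrices satisfying V_{G'}·V_{G'−1}·⋯·V_1 = I_N. Define the (N·G')×(N·G') unitary W = Σ_{x=0}^{G'−1} (V_x·V_{x−1}·⋯·V_1) ⊗ |x⟩⟨x| (with the empty product at x = 0 equal to I_N). Then W†·H·W = I_N ⊗ (2·I_{G'} − S − S†), where H is the periodic Feynman–Kitaev clock Hamiltonian for V_1,…,V_{G'} and S is the G'×G' cyclic shift matrix defined by S|x⟩ = |x−1 mod G'⟩. -/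
open Matrix Kronecker

/-- The partial product `V_x · V_{x−1} · ⋯ · V_1` (empty product at `x = 0`). -/
noncomputable def partialProd {N : ℕ} (V : ℕ → Matrix (Fin N) (Fin N) ℂ) :
    ℕ → Matrix (Fin N) (Fin N) ℂ
  | 0 => 1
  | x + 1 => V (x + 1) * partialProd V x

/-- The periodic Feynman–Kitaev clock Hamiltonian
`H = Σ_{x=1}^{G'} (−V_x ⊗ |x⟩⟨x−1| − V_xᴴ ⊗ |x−1⟩⟨x| + I ⊗ |x⟩⟨x| + I ⊗ |x−1⟩⟨x−1|)`,
with clock indices taken mod `G'`. -/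
noncomputable def clockHamiltonian (N G' : ℕ) [NeZero G']
    (V : ℕ → Matrix (Fin N) (Fin N) ℂ) :
    Matrix (Fin N × ZMod G') (Fin N × ZMod G') ℂ :=
  ∑ x ∈ Finset.Icc 1 G',
    (-(V x) ⊗ₖ Matrix.single ((x : ZMod G')) ((x : ZMod G') - 1) 1
      - (V x)ᴴ ⊗ₖ Matrix.single ((x : ZMod G') - 1) ((x : ZMod G')) 1
      + (1 : Matrix (Fin N) (Fin N) ℂ) ⊗ₖ
          Matrix.single ((x : ZMod G')) ((x : ZMod G')) 1
      + (1 : Matrix (Fin N) (Fin N) ℂ) ⊗ₖ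
          Matrix.single ((x : ZMod G') - 1) ((x : ZMod G') - 1) 1)

namespace ClockAux

set_option linter.unusedSectionVars false

variable {N G' : ℕ} [NeZero G']

lemma kron_conjT (A : Matrix (Fin N) (Fin N) ℂ) (B : Matrix (ZMod G') (ZMod G') ℂ) :
    (A ⊗ₖ B)ᴴ = Aᴴ ⊗ₖ Bᴴ := by
  ext ⟨i, k⟩ ⟨j, l⟩
  simp [conjTranspose_apply, kroneckerMap_apply, star_mul']

lemma stdBasis_conjT (a b : ZMod G') :
    (Matrix.single a b (1 : ℂ))ᴴ = Matrix.single b a 1 := by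
  ext i j
  simp only [conjTranspose_apply, single, of_apply]
  split_ifs with h1 h2 h2 <;> simp_all [and_comm]

lemma neg_kron (A : Matrix (Fin N) (Fin N) ℂ) (B : Matrix (ZMod G') (ZMod G') ℂ) :
    (-A) ⊗ₖ B = -(A ⊗ₖ B) := by
  ext ⟨i, k⟩ ⟨j, l⟩
  simp [kroneckerMap_apply]

lemma partialProd_unitary (V : ℕ → Matrix (Fin N) (Fin N) ℂ)
    (hunit : ∀ x, 1 ≤ x → x ≤ G' → (V x)ᴴ * V x = 1 ∧ V x * (V x)ᴴ = 1) :
    ∀ x, x ≤ G' → (partialProd V x)ᴴ * partialProd V x = 1 := by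
  intro x
  induction x with
  | zero => intro _; simp [partialProd]
  | succ n ih =>
      intro h
      have h1 := (hunit (n + 1) (Nat.le_add_left 1 n) h).1
      have h2 := ih (Nat.le_of_succ_le h)
      show (V (n+1) * partialProd V n)ᴴ * (V (n+1) * partialProd V n) = 1
      rw [conjTranspose_mul, mul_assoc, ← mul_assoc ((V (n+1))ᴴ), h1, one_mul, h2]

lemma sum_diag :
    ∑ k : ZMod G', Matrix.single k k (1 : ℂ) = 1 := by
  ext i j
  rw [Matrix.sum_apply]
  rw [Finset.sum_eq_single i]
  · simp [single, one_apply, eq_comm]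
  · intro k _ hk
    simp only [single, of_apply]
    exact if_neg (fun h => hk h.1)
  · simp

lemma sum_shift_diag :
    ∑ k : ZMod G', Matrix.single (k - 1) (k - 1) (1 : ℂ) = 1 := by
  rw [← sum_diag (G' := G')]
  exact Fintype.sum_equiv (Equiv.subRight (1 : ZMod G')) _ _ (fun k => rfl)

lemma sum_lower :
    ∑ k : ZMod G', Matrix.single k (k - 1) (1 : ℂ) =
      (Matrix.of fun i j => if i = j - 1 then (1:ℂ) else 0)ᴴ := by
  ext i j
  rw [Matrix.sum_apply]
  rw [Finset.sum_eq_single i]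
  · simp only [single, of_apply, conjTranspose_apply]
    by_cases h : i - 1 = j
    · rw [if_pos ⟨trivial, h⟩, if_pos h.symm, star_one]
    · rw [if_neg (fun hh => h hh.2), if_neg (fun hh => h hh.symm), star_zero]
  · intro k _ hk
    simp only [single, of_apply]
    exact if_neg (fun h => hk h.1)
  · simp

lemma sum_upper :
    ∑ k : ZMod G', Matrix.single (k - 1) k (1 : ℂ) =
      Matrix.of fun i j => if i = j - 1 then (1:ℂ) else 0 := by
  ext i j
  rw [Matrix.sum_apply]
  rw [Finset.sum_eq_single j]
  · simp only [single, of_apply]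
    by_cases h : j - 1 = i
    · rw [if_pos ⟨h, trivial⟩, if_pos h.symm]
    · rw [if_neg (fun hh => h hh.1), if_neg (fun hh => h hh.symm)]
  · intro k _ hk
    simp only [single, of_apply]
    exact if_neg (fun h => hk h.2)
  · simp

lemma one_kron_sum (f : ZMod G' → Matrix (ZMod G') (ZMod G') ℂ) :
    ∑ k : ZMod G', (1 : Matrix (Fin N) (Fin N) ℂ) ⊗ₖ f k = 1 ⊗ₖ ∑ k, f k := by
  ext ⟨i, a⟩ ⟨j, b⟩
  simp [kroneckerMap_apply, Matrix.sum_apply, Finset.mul_sum]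

lemma conj_term (Q : ZMod G' → Matrix (Fin N) (Fin N) ℂ)
    (M : Matrix (Fin N) (Fin N) ℂ) (c d : ZMod G') :
    (∑ k : ZMod G', Q k ⊗ₖ Matrix.single k k (1 : ℂ))ᴴ *
        (M ⊗ₖ Matrix.single c d 1) *
        (∑ k : ZMod G', Q k ⊗ₖ Matrix.single k k 1) =
      ((Q c)ᴴ * M * Q d) ⊗ₖ Matrix.single c d 1 := by
  have hW : (∑ k : ZMod G', Q k ⊗ₖ Matrix.single k k (1 : ℂ))ᴴ
      = ∑ k : ZMod G', (Q k)ᴴ ⊗ₖ Matrix.single k k 1 := by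
    rw [conjTranspose_sum]
    exact Finset.sum_congr rfl fun k _ => by rw [kron_conjT, stdBasis_conjT]
  rw [hW, Finset.sum_mul]
  have h1 : ∑ a : ZMod G',
      ((Q a)ᴴ ⊗ₖ Matrix.single a a (1:ℂ)) * (M ⊗ₖ Matrix.single c d 1)
      = ((Q c)ᴴ * M) ⊗ₖ Matrix.single c d 1 := by
    rw [Finset.sum_eq_single c]
    · rw [← mul_kronecker_mul, Matrix.single_mul_single_same, one_mul]
    · intro a _ ha
      rw [← mul_kronecker_mul, Matrix.single_mul_single_of_ne (h := ha), kronecker_zero]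
    · simp
  rw [h1, Finset.mul_sum]
  rw [Finset.sum_eq_single d]
  · rw [← mul_kronecker_mul, Matrix.single_mul_single_same, one_mul]
  · intro b _ hb
    rw [← mul_kronecker_mul, Matrix.single_mul_single_of_ne (h := Ne.symm hb), kronecker_zero]
  · simp

noncomputable def Qm (V : ℕ → Matrix (Fin N) (Fin N) ℂ) (k : ZMod G') :
    Matrix (Fin N) (Fin N) ℂ := partialProd V k.val

noncomputable def Vt (V : ℕ → Matrix (Fin N) (Fin N) ℂ) (k : ZMod G') :
    Matrix (Fin N) (Fin N) ℂ := if k = 0 then V G' else V k.val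

lemma Vt_mul_Q (V : ℕ → Matrix (Fin N) (Fin N) ℂ) (hprod : partialProd V G' = 1)
    (k : ZMod G') : Vt V k * Qm V (k - 1) = Qm V k := by
  have hG : 0 < G' := Nat.pos_of_ne_zero (NeZero.ne G')
  by_cases hk : k = 0
  · subst hk
    have h1 : ((0 : ZMod G') - 1) = ((G' - 1 : ℕ) : ZMod G') := by
      have hz : ((G' : ℕ) : ZMod G') = 0 := ZMod.natCast_self G'
      rw [Nat.cast_sub hG, hz, Nat.cast_one, zero_sub]
    have h2 : ((0 : ZMod G') - 1).val = G' - 1 := by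
      rw [h1, ZMod.val_cast_of_lt (Nat.sub_lt hG Nat.one_pos)]
    unfold Vt Qm
    rw [if_pos rfl, h2, ZMod.val_zero]
    have h3 : partialProd V (G' - 1 + 1) = V (G' - 1 + 1) * partialProd V (G' - 1) := rfl
    have h4 : G' - 1 + 1 = G' := Nat.succ_pred_eq_of_pos hG
    rw [h4] at h3
    rw [← h3, hprod]
    rfl
  · have hv : k.val ≠ 0 := fun h => hk ((ZMod.val_eq_zero k).mp h)
    obtain ⟨m, hm⟩ := Nat.exists_eq_succ_of_ne_zero hv
    have hklt : k.val < G' := ZMod.val_lt k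
    have hcast : ((k.val : ℕ) : ZMod G') = k := ZMod.natCast_rightInverse k
    have h1 : k - 1 = ((m : ℕ) : ZMod G') := by
      rw [← hcast, hm]; push_cast; ring
    have h2 : (k - 1).val = m := by
      rw [h1, ZMod.val_cast_of_lt (by omega)]
    unfold Vt Qm
    rw [if_neg hk, h2, hm]
    rfl

lemma QQ (V : ℕ → Matrix (Fin N) (Fin N) ℂ)
    (hunit : ∀ x, 1 ≤ x → x ≤ G' → (V x)ᴴ * V x = 1 ∧ V x * (V x)ᴴ = 1)
    (k : ZMod G') : (Qm V k)ᴴ * Qm V k = 1 :=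
  partialProd_unitary V hunit k.val (le_of_lt (ZMod.val_lt k))

lemma final_comb (A B : Matrix (ZMod G') (ZMod G') ℂ) :
    -((1 : Matrix (Fin N) (Fin N) ℂ) ⊗ₖ A) - 1 ⊗ₖ B + 1 ⊗ₖ (1 : Matrix (ZMod G') (ZMod G') ℂ)
        + 1 ⊗ₖ (1 : Matrix (ZMod G') (ZMod G') ℂ)
      = (1 : Matrix (Fin N) (Fin N) ℂ) ⊗ₖ ((2 : ℂ) • (1 : Matrix (ZMod G') (ZMod G') ℂ) - B - A) := by
  ext ⟨i, a⟩ ⟨j, b⟩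
  simp only [kroneckerMap_apply, Matrix.add_apply, Matrix.sub_apply, Matrix.neg_apply,
    Matrix.smul_apply, smul_eq_mul]
  ring

end ClockAux

open ClockAux in
/-- If `V_1,…,V_{G'}` are `N×N` unitaries with `V_{G'}⋯V_1 = I` and
`W = Σ_{x=0}^{G'−1} (V_x⋯V_1) ⊗ |x⟩⟨x|`, then `Wᴴ H W = I ⊗ (2I − S − Sᴴ)`, where `H` is
the periodic Feynman–Kitaev clock Hamiltonian and `S` is the cyclic shift
`S|x⟩ = |x−1⟩`. -/
theorem clock_hamiltonian_conjugation (N G' : ℕ) [NeZero G']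
    (V : ℕ → Matrix (Fin N) (Fin N) ℂ)
    (hunit : ∀ x, 1 ≤ x → x ≤ G' → (V x)ᴴ * V x = 1 ∧ V x * (V x)ᴴ = 1)
    (hprod : partialProd V G' = 1) :
    let W : Matrix (Fin N × ZMod G') (Fin N × ZMod G') ℂ :=
      ∑ x ∈ Finset.range G',
        (partialProd V x) ⊗ₖ Matrix.single ((x : ZMod G')) ((x : ZMod G')) 1
    let S : Matrix (ZMod G') (ZMod G') ℂ :=
      Matrix.of fun i j => if i = j - 1 then 1 else 0
    Wᴴ * clockHamiltonian N G' V * W =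
      (1 : Matrix (Fin N) (Fin N) ℂ) ⊗ₖ
        ((2 : ℂ) • (1 : Matrix (ZMod G') (ZMod G') ℂ) - S - Sᴴ) := by
  intro W S
  have hG : 0 < G' := Nat.pos_of_ne_zero (NeZero.ne G')
  -- `W` as a sum over `ZMod G'`
  have hW : W = ∑ k : ZMod G', Qm V k ⊗ₖ Matrix.single k k (1 : ℂ) := by
    show (∑ x ∈ Finset.range G',
        (partialProd V x) ⊗ₖ Matrix.single ((x : ZMod G')) ((x : ZMod G')) 1) = _
    refine Finset.sum_nbij' (fun x => (x : ZMod G')) (fun k => k.val) ?_ ?_ ?_ ?_ ?_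
    · intro x _; exact Finset.mem_univ _
    · intro k _; exact Finset.mem_range.mpr (ZMod.val_lt k)
    · intro x hx; exact ZMod.val_cast_of_lt (Finset.mem_range.mp hx)
    · intro k _; exact ZMod.natCast_rightInverse k
    · intro x hx
      unfold Qm
      rw [ZMod.val_cast_of_lt (Finset.mem_range.mp hx)]
  -- a helper for clock indices
  have hcastG : ∀ x ∈ Finset.Icc 1 G', (x : ZMod G') = 0 → x = G' := by
    intro x hx h0
    obtain ⟨h1, h2⟩ := Finset.mem_Icc.mp hx
    have hdvd : G' ∣ x := (ZMod.natCast_eq_zero_iff x G').mp h0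
    exact le_antisymm h2 (Nat.le_of_dvd h1 hdvd)
  have hVt : ∀ x ∈ Finset.Icc 1 G', Vt V ((x : ZMod G')) = V x := by
    intro x hx
    obtain ⟨h1, h2⟩ := Finset.mem_Icc.mp hx
    by_cases h0 : (x : ZMod G') = 0
    · rw [Vt, if_pos h0, hcastG x hx h0]
    · have hlt : x < G' := lt_of_le_of_ne h2
        (fun h => h0 (by rw [h]; exact ZMod.natCast_self G'))
      rw [Vt, if_neg h0, ZMod.val_cast_of_lt hlt]
  -- `H` as a sum over `ZMod G'`
  have hH : clockHamiltonian N G' V = ∑ k : ZMod G',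
      (-(Vt V k) ⊗ₖ Matrix.single k (k - 1) (1 : ℂ)
        - (Vt V k)ᴴ ⊗ₖ Matrix.single (k - 1) k 1
        + (1 : Matrix (Fin N) (Fin N) ℂ) ⊗ₖ Matrix.single k k 1
        + (1 : Matrix (Fin N) (Fin N) ℂ) ⊗ₖ Matrix.single (k - 1) (k - 1) 1) := by
    unfold clockHamiltonian
    refine Finset.sum_nbij' (fun x => (x : ZMod G'))
      (fun k => if k = 0 then G' else k.val) ?_ ?_ ?_ ?_ ?_
    · intro x _; exact Finset.mem_univ _
    · intro k _
      by_cases hk : k = 0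
      · simp [hk, Finset.mem_Icc]; omega
      · have hv : k.val ≠ 0 := fun h => hk ((ZMod.val_eq_zero k).mp h)
        have hklt : k.val < G' := ZMod.val_lt k
        rw [if_neg hk]
        exact Finset.mem_Icc.mpr ⟨by omega, by omega⟩
    · intro x hx
      by_cases h0 : (x : ZMod G') = 0
      · rw [if_pos h0, hcastG x hx h0]
      · obtain ⟨h1, h2⟩ := Finset.mem_Icc.mp hx
        have hlt : x < G' := lt_of_le_of_ne h2
          (fun h => h0 (by rw [h]; exact ZMod.natCast_self G'))
        rw [if_neg h0]
        exact ZMod.val_cast_of_lt hlt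
    · intro k _
      by_cases hk : k = 0
      · rw [if_pos hk, hk]; exact ZMod.natCast_self G'
      · rw [if_neg hk]; exact ZMod.natCast_rightInverse k
    · intro x hx
      rw [hVt x hx]
  rw [hW, hH]
  conv_lhs =>
    lhs
    rw [Matrix.mul_sum]
  rw [Finset.sum_mul]
  have hterm : ∀ k ∈ (Finset.univ : Finset (ZMod G')),
      (∑ k' : ZMod G', Qm V k' ⊗ₖ Matrix.single k' k' (1 : ℂ))ᴴ *
          (-(Vt V k) ⊗ₖ Matrix.single k (k - 1) (1 : ℂ)
            - (Vt V k)ᴴ ⊗ₖ Matrix.single (k - 1) k 1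
            + (1 : Matrix (Fin N) (Fin N) ℂ) ⊗ₖ Matrix.single k k 1
            + (1 : Matrix (Fin N) (Fin N) ℂ) ⊗ₖ Matrix.single (k - 1) (k - 1) 1) *
          (∑ k' : ZMod G', Qm V k' ⊗ₖ Matrix.single k' k' (1 : ℂ)) =
        (-((1 : Matrix (Fin N) (Fin N) ℂ) ⊗ₖ Matrix.single k (k - 1) (1 : ℂ))
          - (1 : Matrix (Fin N) (Fin N) ℂ) ⊗ₖ Matrix.single (k - 1) k 1
          + (1 : Matrix (Fin N) (Fin N) ℂ) ⊗ₖ Matrix.single k k 1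
          + (1 : Matrix (Fin N) (Fin N) ℂ) ⊗ₖ Matrix.single (k - 1) (k - 1) 1) := by
    intro k _
    have key1 : (Qm V k)ᴴ * Vt V k * Qm V (k - 1) = 1 := by
      rw [mul_assoc, Vt_mul_Q V hprod, QQ V hunit]
    have key2 : (Qm V (k - 1))ᴴ * (Vt V k)ᴴ * Qm V k = 1 := by
      have h := congrArg conjTranspose key1
      rwa [conjTranspose_mul, conjTranspose_mul, conjTranspose_conjTranspose,
        conjTranspose_one, ← mul_assoc] at h
    have key3 : (Qm V k)ᴴ * 1 * Qm V k = 1 := by rw [mul_one, QQ V hunit]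
    have key4 : (Qm V (k - 1))ᴴ * 1 * Qm V (k - 1) = 1 := by rw [mul_one, QQ V hunit]
    simp only [neg_kron, mul_add, add_mul, mul_sub, sub_mul, mul_neg, neg_mul]
    simp only [conj_term]
    rw [key1, key2, key3, key4]
  rw [Finset.sum_congr rfl hterm]
  rw [Finset.sum_add_distrib, Finset.sum_add_distrib, Finset.sum_sub_distrib,
    Finset.sum_neg_distrib, one_kron_sum, one_kron_sum, one_kron_sum, one_kron_sum,
    sum_diag, sum_shift_diag, sum_lower, sum_upper]
  exact final_comb _ _
end

section
/- Let G' ≥ 1, let V_1, …, V_{G'} be N×N unitary complex matrices, and let h_0 ∈ ℂ^N be a unit vector with V_{G'}·V_{G'−1}·⋯·V_1·h_0 = h_0. Define h_j = V_j·V_{j−1}·⋯·V_1·h_0 for j = 0,…,G'−1 and, for each k ∈ {0,…,G'−1}, define φ_k = (1/√G')·Σ_{j=0}^{G'−1} e^{2πijk/G'}·(h_j ⊗ |j⟩). Then each φ_k is a unit vector, the vectors φ_0,…,φ_{G'−1} are pairwise orthogonal, and H·φ_k = 2(1 − cos(2πk/G'))·φ_k, where H is the periodic Feynman–Kitaev clock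 Hamiltonian for V_1,…,V_{G'}. -/
open Matrix Kronecker

section Helpers

variable {N G' : ℕ} [NeZero G']

lemma sum_zmod_val {M : Type*} [AddCommMonoid M] (f : ℕ → M) :
    ∑ c : ZMod G', f (ZMod.val c) = ∑ j ∈ Finset.range G', f j := by
  refine Finset.sum_nbij' (fun c => ZMod.val c) (fun j => (j : ZMod G')) ?_ ?_ ?_ ?_ ?_
  · intro c _; exact Finset.mem_range.2 (ZMod.val_lt c)
  · intro j _; exact Finset.mem_univ _
  · intro c _; exact ZMod.natCast_rightInverse c
  · intro j hj; exact ZMod.val_cast_of_lt (Finset.mem_range.1 hj)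
  · intro c _; rfl

lemma kron_std_mulVec (A : Matrix (Fin N) (Fin N) ℂ) (a b : ZMod G')
    (v : Fin N × ZMod G' → ℂ) (i : Fin N) (c : ZMod G') :
    ((A ⊗ₖ Matrix.single a b (1:ℂ)) *ᵥ v) (i, c) =
      if c = a then (A *ᵥ fun i' => v (i', b)) i else 0 := by
  simp only [Matrix.mulVec, dotProduct, Fintype.sum_prod_type,
    Matrix.kroneckerMap_apply, Matrix.single, Matrix.of_apply]
  by_cases h : c = a
  · subst h
    simp only [if_pos rfl]
    refine Finset.sum_congr rfl fun i' _ => ?_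
    rw [Finset.sum_eq_single b]
    · simp
    · intro c' _ hc'; simp [Ne.symm hc']
    · simp
  · simp only [if_neg h]
    refine Finset.sum_eq_zero fun i' _ => Finset.sum_eq_zero fun c' _ => ?_
    have : ¬(a = c ∧ b = c') := fun h2 => h h2.1.symm
    simp [this]

end Helpers

lemma sum_Icc_eq_sum_zmod {G' : ℕ} [NeZero G'] {M : Type*} [AddCommMonoid M] (f : ℕ → M) :
    ∑ x ∈ Finset.Icc 1 G', f x = ∑ c : ZMod G', f (ZMod.val c + 1) := by
  refine Finset.sum_nbij' (fun x => ((x - 1 : ℕ) : ZMod G')) (fun c => ZMod.val c + 1)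
    ?_ ?_ ?_ ?_ ?_
  · intro x _; exact Finset.mem_univ _
  · intro c _
    have := ZMod.val_lt c
    simp only [Finset.mem_Icc]; omega
  · intro x hx
    simp only [Finset.mem_Icc] at hx
    show ZMod.val ((x - 1 : ℕ) : ZMod G') + 1 = x
    rw [ZMod.val_natCast, Nat.mod_eq_of_lt (by omega)]
    omega
  · intro c _
    show (((ZMod.val c + 1 - 1 : ℕ)) : ZMod G') = c
    have : ZMod.val c + 1 - 1 = ZMod.val c := rfl
    rw [this]
    exact ZMod.natCast_rightInverse c
  · intro x hx
    simp only [Finset.mem_Icc] at hx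
    show f x = f (ZMod.val ((x - 1 : ℕ) : ZMod G') + 1)
    rw [ZMod.val_natCast, Nat.mod_eq_of_lt (by omega)]
    congr 1
    omega

lemma sum_mulVec' {n : Type*} [Fintype n] {ι : Type*} (t : Finset ι)
    (M : ι → Matrix n n ℂ) (v : n → ℂ) :
    ((∑ x ∈ t, M x) *ᵥ v) = ∑ x ∈ t, (M x *ᵥ v) := by
  ext p
  simp only [Matrix.mulVec, dotProduct, Matrix.sum_apply, Finset.sum_apply,
    Finset.sum_mul]
  rw [Finset.sum_comm]

lemma mulVec_const_mul {n : Type*} [Fintype n] (A : Matrix n n ℂ) (a : ℂ) (w : n → ℂ) :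
    (A *ᵥ fun i => a * w i) = fun i => a * (A *ᵥ w) i := by
  ext i
  simp only [Matrix.mulVec, dotProduct, Finset.mul_sum]
  exact Finset.sum_congr rfl fun j _ => by ring


/-- Let `V_1,…,V_{G'}` be `N×N` unitaries and `h_0` a unit vector with
`V_{G'}⋯V_1 h_0 = h_0`. With `h_j = V_j⋯V_1 h_0` and
`φ_k = (1/√G') Σ_j e^{2πijk/G'} (h_j ⊗ |j⟩)` for `k = 0,…,G'−1`, each `φ_k` is a unit
vector, they are pairwise orthogonal, and `H φ_k = 2(1 − cos(2πk/G')) φ_k`, where `H` is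
the periodic Feynman–Kitaev clock Hamiltonian. -/
theorem clock_hamiltonian_eigenvectors (N G' : ℕ) [NeZero G']
    (V : ℕ → Matrix (Fin N) (Fin N) ℂ)
    (hunit : ∀ x, 1 ≤ x → x ≤ G' → (V x)ᴴ * V x = 1 ∧ V x * (V x)ᴴ = 1)
    (h0 : Fin N → ℂ) (h0unit : ∑ i, ‖h0 i‖ ^ 2 = 1)
    (hfix : partialProd V G' *ᵥ h0 = h0) :
    let φ : ℕ → (Fin N × ZMod G') → ℂ := fun k =>
      ((Real.sqrt G' : ℝ) : ℂ)⁻¹ •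
        ∑ j ∈ Finset.range G',
          Complex.exp (2 * Real.pi * Complex.I * (j : ℂ) * (k : ℂ) / (G' : ℂ)) •
            (fun p : Fin N × ZMod G' =>
              (partialProd V j *ᵥ h0) p.1 * (if p.2 = (j : ZMod G') then 1 else 0))
    (∀ k < G', ∑ p, ‖φ k p‖ ^ 2 = 1) ∧
    (∀ k < G', ∀ k' < G', k ≠ k' → star (φ k) ⬝ᵥ φ k' = 0) ∧
    (∀ k < G', clockHamiltonian N G' V *ᵥ φ k =
      ((2 * (1 - Real.cos (2 * Real.pi * k / G')) : ℝ) : ℂ) • φ k) := by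
  intro φ
  have hG0 : 0 < G' := Nat.pos_of_ne_zero (NeZero.ne G')
  have hGC : (G' : ℂ) ≠ 0 := Nat.cast_ne_zero.2 (NeZero.ne G')
  have hGR : (0:ℝ) < G' := Nat.cast_pos.2 hG0
  set s : ℂ := ((Real.sqrt G' : ℝ) : ℂ)⁻¹ with hs
  set Hv : ℕ → (Fin N → ℂ) := fun j => partialProd V j *ᵥ h0 with hHv
  -- ω and its properties
  set ω : ℕ → ℂ := fun k => Complex.exp (2 * Real.pi * Complex.I * (k : ℂ) / (G' : ℂ))
    with hω
  have hωpow : ∀ k j : ℕ,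
      Complex.exp (2 * Real.pi * Complex.I * (j : ℂ) * (k : ℂ) / (G' : ℂ)) = ω k ^ j := by
    intro k j
    rw [hω, ← Complex.exp_nat_mul]
    congr 1
    ring
  have hωG : ∀ k : ℕ, ω k ^ G' = 1 := by
    intro k
    rw [hω, ← Complex.exp_nat_mul]
    have : (G' : ℂ) * (2 * Real.pi * Complex.I * (k : ℂ) / (G' : ℂ))
        = (k : ℤ) * (2 * Real.pi * Complex.I) := by
      push_cast
      field_simp
    rw [this, Complex.exp_int_mul_two_pi_mul_I]
  have hωmod : ∀ k n : ℕ, ω k ^ (n % G') = ω k ^ n := by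
    intro k n
    conv_rhs => rw [← Nat.div_add_mod n G', pow_add, pow_mul, hωG, one_pow, one_mul]
  have hωadd : ∀ k : ℕ, ∀ a b : ZMod G',
      ω k ^ (a + b).val = ω k ^ a.val * ω k ^ b.val := by
    intro k a b
    rw [ZMod.val_add, hωmod, pow_add]
  have hωone : ∀ k : ℕ, ω k ^ (1 : ZMod G').val = ω k := by
    intro k
    have : (1 : ZMod G') = ((1 : ℕ) : ZMod G') := by norm_num
    rw [this, ZMod.val_natCast, hωmod, pow_one]
  have hωne : ∀ k : ℕ, ω k ≠ 0 := fun k => Complex.exp_ne_zero _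
  -- step lemma
  have hstep : ∀ c : ZMod G', V (c.val + 1) *ᵥ Hv c.val = Hv (c + 1).val := by
    intro c
    have hvlt := ZMod.val_lt c
    by_cases hc : c.val + 1 < G'
    · have h1 : (1 : ZMod G').val = 1 % G' := by
        rw [show (1 : ZMod G') = ((1:ℕ) : ZMod G') by norm_num, ZMod.val_natCast]
      have h1' : 1 % G' = 1 := Nat.mod_eq_of_lt (by omega)
      have : (c + 1).val = c.val + 1 := by
        rw [ZMod.val_add, h1, h1', Nat.mod_eq_of_lt hc]
      rw [this, hHv]
      show V (c.val + 1) *ᵥ (partialProd V c.val *ᵥ h0) = partialProd V (c.val + 1) *ᵥ h0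
      rw [Matrix.mulVec_mulVec]
      rfl
    · have hceq : c.val + 1 = G' := by omega
      have hc1 : c + 1 = 0 := by
        have : ((c.val + 1 : ℕ) : ZMod G') = ((G' : ℕ) : ZMod G') := by rw [hceq]
        rwa [Nat.cast_add, Nat.cast_one, ZMod.natCast_rightInverse c,
          ZMod.natCast_self] at this
      rw [hc1]
      show V (c.val + 1) *ᵥ Hv c.val = Hv (0 : ZMod G').val
      have h0v : (0 : ZMod G').val = 0 := ZMod.val_zero
      rw [h0v, hceq, hHv]
      show V G' *ᵥ (partialProd V c.val *ᵥ h0) = partialProd V 0 *ᵥ h0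
      rw [Matrix.mulVec_mulVec]
      obtain ⟨m, hm⟩ : ∃ m, ZMod.val c = m := ⟨_, rfl⟩
      rw [hm] at hceq ⊢
      have hpp : V G' * partialProd V m = partialProd V G' := by
        rw [← hceq]
        rfl
      rw [hpp, hfix]
      show h0 = (1 : Matrix (Fin N) (Fin N) ℂ) *ᵥ h0
      rw [Matrix.one_mulVec]
  have hstep' : ∀ c : ZMod G', (V (c.val + 1))ᴴ *ᵥ Hv (c + 1).val = Hv c.val := by
    intro c
    rw [← hstep c, Matrix.mulVec_mulVec,
      (hunit (c.val + 1) (by omega) (by have := ZMod.val_lt c; omega)).1,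
      Matrix.one_mulVec]
  -- dot products
  have hdotself : ∀ w : Fin N → ℂ, star w ⬝ᵥ w = ((∑ i, ‖w i‖ ^ 2 : ℝ) : ℂ) := by
    intro w
    simp only [dotProduct, Pi.star_apply, Complex.ofReal_sum]
    refine Finset.sum_congr rfl fun i _ => ?_
    rw [Complex.star_def, mul_comm, Complex.mul_conj, Complex.normSq_eq_norm_sq]
  have hnorm : ∀ j ≤ G', star (Hv j) ⬝ᵥ Hv j = 1 := by
    intro j hj
    induction j with
    | zero =>
      have hv0 : Hv 0 = h0 := by
        show (1 : Matrix (Fin N) (Fin N) ℂ) *ᵥ h0 = h0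
        rw [Matrix.one_mulVec]
      rw [hv0, hdotself, h0unit, Complex.ofReal_one]
    | succ n ih =>
      have hn : star (Hv n) ⬝ᵥ Hv n = 1 := ih (by omega)
      show star (partialProd V (n+1) *ᵥ h0) ⬝ᵥ (partialProd V (n+1) *ᵥ h0) = 1
      have hpp : partialProd V (n+1) *ᵥ h0 = V (n+1) *ᵥ Hv n := by
        show (V (n+1) * partialProd V n) *ᵥ h0 = _
        rw [← Matrix.mulVec_mulVec]
      rw [hpp, Matrix.star_mulVec, Matrix.dotProduct_mulVec, Matrix.vecMul_vecMul,
        (hunit (n+1) (by omega) hj).1, Matrix.vecMul_one]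
      exact hn
  have hnormR : ∀ j ≤ G', ∑ i, ‖Hv j i‖ ^ 2 = 1 := by
    intro j hj
    have := hnorm j hj
    rw [hdotself] at this
    exact_mod_cast this
  -- φ applied pointwise
  have φapp : ∀ k : ℕ, ∀ i : Fin N, ∀ c : ZMod G',
      φ k (i, c) = s * (ω k ^ c.val * Hv c.val i) := by
    intro k i c
    show s • (∑ j ∈ Finset.range G',
        Complex.exp (2 * Real.pi * Complex.I * (j : ℂ) * (k : ℂ) / (G' : ℂ)) •
          (fun p : Fin N × ZMod G' =>
            (partialProd V j *ᵥ h0) p.1 * (if p.2 = (j : ZMod G') then 1 else 0))) (i, c)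
      = s * (ω k ^ c.val * Hv c.val i)
    rw [smul_eq_mul, Finset.sum_apply]
    congr 1
    rw [Finset.sum_eq_single c.val]
    · rw [Pi.smul_apply, smul_eq_mul, hωpow]
      have : c = ((c.val : ℕ) : ZMod G') := (ZMod.natCast_rightInverse c).symm
      simp only [← this, if_pos rfl, if_true, mul_one]
      rfl
    · intro j hj hne
      rw [Pi.smul_apply, smul_eq_mul]
      have : ¬(c = (j : ZMod G')) := by
        intro hcj
        apply hne
        rw [hcj, ZMod.val_natCast, Nat.mod_eq_of_lt (Finset.mem_range.1 hj)]
      simp [this]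
    · intro habs
      exact absurd (Finset.mem_range.2 (ZMod.val_lt c)) habs
  have hs2 : s * s = (G' : ℂ)⁻¹ := by
    rw [hs, ← mul_inv, ← Complex.ofReal_mul, Real.mul_self_sqrt (le_of_lt hGR),
      Complex.ofReal_natCast]
  have hsconj : (starRingEnd ℂ) s = s := by
    simp [hs, ← Complex.ofReal_inv, Complex.conj_ofReal]
  have hωI : ∀ k : ℕ, ω k = Complex.exp (((2 * Real.pi * k / G' : ℝ) : ℂ) * Complex.I) := by
    intro k
    have harg : 2 * Real.pi * Complex.I * (k : ℂ) / (G' : ℂ)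
        = ((2 * Real.pi * k / G' : ℝ) : ℂ) * Complex.I := by
      push_cast
      ring
    simp only [hω]
    rw [harg]
  have hωnorm : ∀ k : ℕ, ‖ω k‖ = 1 := by
    intro k
    rw [hωI, Complex.norm_exp_ofReal_mul_I]
  refine ⟨?_, ?_, ?_⟩
  · -- unit norm
    intro k hk
    have hpt : ∀ p : Fin N × ZMod G', ‖φ k p‖ ^ 2 = (G' : ℝ)⁻¹ * ‖Hv (p.2).val p.1‖ ^ 2 := by
      intro p
      obtain ⟨i, c⟩ := p
      show ‖φ k (i, c)‖ ^ 2 = (G' : ℝ)⁻¹ * ‖Hv c.val i‖ ^ 2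
      have h1 : ‖s‖ ^ 2 = (G' : ℝ)⁻¹ := by
        have h2 : ‖s‖ ^ 2 = ‖s * s‖ := by rw [norm_mul, sq]
        rw [h2, hs2, norm_inv, Complex.norm_natCast]
      rw [φapp, norm_mul, norm_mul, mul_pow, mul_pow, norm_pow, hωnorm, h1]
      ring
    calc ∑ p, ‖φ k p‖ ^ 2
        = ∑ p : Fin N × ZMod G', (G' : ℝ)⁻¹ * ‖Hv (p.2).val p.1‖ ^ 2 :=
          Finset.sum_congr rfl fun p _ => hpt p
      _ = (G' : ℝ)⁻¹ * ∑ p : Fin N × ZMod G', ‖Hv (p.2).val p.1‖ ^ 2 := by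
          rw [Finset.mul_sum]
      _ = (G' : ℝ)⁻¹ * ∑ c : ZMod G', ∑ i, ‖Hv c.val i‖ ^ 2 := by
          rw [Fintype.sum_prod_type_right]
      _ = (G' : ℝ)⁻¹ * ∑ _c : ZMod G', (1 : ℝ) := by
          congr 1
          exact Finset.sum_congr rfl fun c _ => hnormR c.val (le_of_lt (ZMod.val_lt c))
      _ = 1 := by
          rw [Finset.sum_const, Finset.card_univ, ZMod.card, nsmul_eq_mul, mul_one]
          exact inv_mul_cancel₀ (ne_of_gt hGR)
  · -- orthogonality
    intro k hk k' hk' hne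
    set ζ : ℂ := (starRingEnd ℂ) (ω k) * ω k' with hζ
    have hωconj : (starRingEnd ℂ) (ω k) = Complex.exp (-(((2 * Real.pi * k / G' : ℝ) : ℂ) * Complex.I)) := by
      rw [hωI, ← Complex.exp_conj, _root_.map_mul, Complex.conj_ofReal, Complex.conj_I]
      ring_nf
    have hζexp : ζ = Complex.exp ((((k' : ℤ) - (k : ℤ) : ℤ) : ℂ) * (2 * Real.pi * Complex.I) / (G' : ℂ)) := by
      rw [hζ, hωconj, hωI, ← Complex.exp_add]
      congr 1
      push_cast
      ring
    have hζG : ζ ^ G' = 1 := by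
      rw [hζ, mul_pow, ← _root_.map_pow, hωG, hωG, _root_.map_one, mul_one]
    have hζne : ζ ≠ 1 := by
      intro habs
      rw [hζexp, Complex.exp_eq_one_iff] at habs
      obtain ⟨n, hn⟩ := habs
      have h2πI : (2 * (Real.pi : ℂ) * Complex.I) ≠ 0 := by
        simp [Real.pi_ne_zero, Complex.I_ne_zero]
      have hd : ((((k' : ℤ) - (k : ℤ)) : ℤ) : ℂ) = (n : ℂ) * (G' : ℂ) := by
        rw [div_eq_iff hGC] at hn
        refine mul_right_cancel₀ h2πI ?_
        rw [hn]
        ring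
      have hdz : ((k' : ℤ) - (k : ℤ)) = n * (G' : ℤ) := by exact_mod_cast hd
      have hkk : (k' : ℤ) - (k : ℤ) ≠ 0 := by
        intro h
        apply hne
        omega
      have hn0 : n ≠ 0 := by
        intro h
        rw [h, zero_mul] at hdz
        exact hkk hdz
      have h1n : (1 : ℤ) ≤ |n| := Int.one_le_abs hn0
      have : |((k' : ℤ) - (k : ℤ))| < (G' : ℤ) := by
        rw [abs_sub_lt_iff]
        constructor <;> omega
      rw [hdz, abs_mul, Int.abs_natCast] at this
      nlinarith [abs_nonneg n]
    have hkey : ∀ c : ZMod G', (∑ i, star (φ k (i, c)) * φ k' (i, c))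
        = (G' : ℂ)⁻¹ * ζ ^ c.val := by
      intro c
      have hc' : c.val ≤ G' := le_of_lt (ZMod.val_lt c)
      calc ∑ i, star (φ k (i, c)) * φ k' (i, c)
          = ((starRingEnd ℂ) s * s * ((starRingEnd ℂ) (ω k) ^ c.val * ω k' ^ c.val)) *
              ∑ i, star (Hv c.val i) * Hv c.val i := by
            rw [Finset.mul_sum]
            refine Finset.sum_congr rfl fun i _ => ?_
            rw [φapp, φapp]
            simp only [star_mul', star_pow, Complex.star_def]
            ring
        _ = (G' : ℂ)⁻¹ * ζ ^ c.val := by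
            have hdp : (∑ i, star (Hv c.val i) * Hv c.val i) = 1 := hnorm c.val hc'
            rw [hdp, mul_one, hsconj, hs2, hζ, mul_pow]
    calc star (φ k) ⬝ᵥ φ k'
        = ∑ p : Fin N × ZMod G', star (φ k p) * φ k' p := rfl
      _ = ∑ c : ZMod G', ∑ i, star (φ k (i, c)) * φ k' (i, c) := by
          rw [Fintype.sum_prod_type_right]
      _ = ∑ c : ZMod G', (G' : ℂ)⁻¹ * ζ ^ c.val := Finset.sum_congr rfl fun c _ => hkey c
      _ = (G' : ℂ)⁻¹ * ∑ j ∈ Finset.range G', ζ ^ j := by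
          rw [← Finset.mul_sum, sum_zmod_val (fun j => ζ ^ j)]
      _ = 0 := by
          rw [geom_sum_eq hζne, hζG]
          simp
  · -- eigenvalue equation
    intro k hk
    funext p
    obtain ⟨i, c⟩ := p
    have hcast : ∀ c' : ZMod G', ((ZMod.val c' + 1 : ℕ) : ZMod G') = c' + 1 := by
      intro c'
      rw [Nat.cast_add, Nat.cast_one, ZMod.natCast_rightInverse c']
    have hφcol : ∀ c' : ZMod G', (fun i' => φ k (i', c')) =
        fun i' => (s * ω k ^ c'.val) * Hv c'.val i' := by
      intro c'
      funext i'
      rw [φapp]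
      ring
    have hsubadd : c - 1 + 1 = c := sub_add_cancel c 1
    have hLHS : (clockHamiltonian N G' V *ᵥ φ k) (i, c) =
        ∑ c' : ZMod G',
          (-(if c = c' + 1 then (s * ω k ^ c'.val) * Hv (c' + 1).val i else 0)
            - (if c = c' then (s * ω k ^ (c' + 1).val) * Hv c'.val i else 0)
            + (if c = c' + 1 then s * (ω k ^ (c' + 1).val * Hv (c' + 1).val i) else 0)
            + (if c = c' then s * (ω k ^ c'.val * Hv c'.val i) else 0)) := by
      rw [clockHamiltonian, sum_mulVec', Finset.sum_apply, sum_Icc_eq_sum_zmod]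
      refine Finset.sum_congr rfl fun c' _ => ?_
      rw [hcast c', add_sub_cancel_right]
      rw [Matrix.add_mulVec, Matrix.add_mulVec, Matrix.sub_mulVec, Matrix.neg_mulVec,
        Pi.add_apply, Pi.add_apply, Pi.sub_apply, Pi.neg_apply,
        kron_std_mulVec, kron_std_mulVec, kron_std_mulVec, kron_std_mulVec]
      rw [hφcol c', hφcol (c' + 1), mulVec_const_mul, mulVec_const_mul,
        hstep c', hstep' c', Matrix.one_mulVec, Matrix.one_mulVec]
      beta_reduce
      split_ifs <;> ring
    rw [hLHS]
    rw [Finset.sum_add_distrib, Finset.sum_add_distrib, Finset.sum_sub_distrib,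
      Finset.sum_neg_distrib]
    have hS1 : ∑ c' : ZMod G', (if c = c' + 1 then (s * ω k ^ c'.val) * Hv (c' + 1).val i else 0)
        = (s * ω k ^ (c - 1).val) * Hv c.val i := by
      rw [Finset.sum_eq_single (c - 1)]
      · rw [if_pos hsubadd.symm, hsubadd]
      · intro c' _ hne
        rw [if_neg]
        intro h
        exact hne (by rw [h, add_sub_cancel_right])
      · intro h; exact absurd (Finset.mem_univ _) h
    have hS2 : ∑ c' : ZMod G', (if c = c' then (s * ω k ^ (c' + 1).val) * Hv c'.val i else 0)
        = (s * ω k ^ (c + 1).val) * Hv c.val i := by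
      rw [Finset.sum_eq_single c]
      · rw [if_pos rfl]
      · intro c' _ hne
        rw [if_neg (fun h => hne h.symm)]
      · intro h; exact absurd (Finset.mem_univ _) h
    have hS3 : ∑ c' : ZMod G', (if c = c' + 1 then s * (ω k ^ (c' + 1).val * Hv (c' + 1).val i) else 0)
        = s * (ω k ^ c.val * Hv c.val i) := by
      rw [Finset.sum_eq_single (c - 1)]
      · rw [if_pos hsubadd.symm, hsubadd]
      · intro c' _ hne
        rw [if_neg]
        intro h
        exact hne (by rw [h, add_sub_cancel_right])
      · intro h; exact absurd (Finset.mem_univ _) h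
    have hS4 : ∑ c' : ZMod G', (if c = c' then s * (ω k ^ c'.val * Hv c'.val i) else 0)
        = s * (ω k ^ c.val * Hv c.val i) := by
      rw [Finset.sum_eq_single c]
      · rw [if_pos rfl]
      · intro c' _ hne
        rw [if_neg (fun h => hne h.symm)]
      · intro h; exact absurd (Finset.mem_univ _) h
    rw [hS1, hS2, hS3, hS4, Pi.smul_apply, smul_eq_mul, φapp]
    -- algebraic identity
    have hw1 : ω k ^ (c - 1).val * ω k = ω k ^ c.val := by
      have := hωadd k (c - 1) 1
      rw [hsubadd, hωone] at this
      exact this.symm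
    have hw2 : ω k ^ (c + 1).val = ω k ^ c.val * ω k := by
      rw [hωadd, hωone]
    have hainv : ω k * (ω k)⁻¹ = 1 := mul_inv_cancel₀ (hωne k)
    have hE : ((2 * (1 - Real.cos (2 * Real.pi * k / G')) : ℝ) : ℂ)
        = 2 - ω k - (ω k)⁻¹ := by
      have hinv : (ω k)⁻¹ = Complex.exp (((-(2 * Real.pi * k / G') : ℝ) : ℂ) * Complex.I) := by
        rw [hωI, ← Complex.exp_neg]
        congr 1
        push_cast
        ring
      rw [hinv, hωI, Complex.exp_mul_I, Complex.exp_mul_I]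
      rw [← Complex.ofReal_cos, ← Complex.ofReal_sin, ← Complex.ofReal_cos, ← Complex.ofReal_sin]
      rw [Real.cos_neg, Real.sin_neg]
      push_cast
      ring
    rw [hw2, hE]
    linear_combination (-(s * Hv c.val i * (ω k)⁻¹)) * hw1
      + (s * Hv c.val i * ω k ^ (c - 1).val) * hainv
end
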